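/- Let G be a discrete group, X a metrizable topological space with a proper cocompact G-action, and Φ a G-equivariant flow on X with X − X^ℝ locally connected. Suppose x ∈ X is contained in the interior of some non-equivariant box. Then there exists a box B (in the equivariant sense) satisfying: (1) G_B = G_{S_B} = G_x, the isotropy group of x; (2) x ∈ S_B ∩ B°; (3) the central slice S_B is connected. -/

import Mathlib

open Pointwise

def IsProperAction (G X : Type*) [Group G] [MulAction G X] [TopologicalSpace X] : Prop :=
  ∀ x : X, ∃ U : Set X, IsOpen U ∧ x ∈ U ∧ {g : G | ((g • U) ∩ U).Nonempty}.Finite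

def IsCocompactAction (G X : Type*) [Group G] [MulAction G X] [TopologicalSpace X] : Prop :=
  CompactSpace (Quotient (MulAction.orbitRel G X))

def IsEquivariantFlow (G : Type*) {X : Type*} [Group G] [MulAction G X] [TopologicalSpace X]
    (Φ : ℝ → X → X) : Prop :=
  Continuous (fun p : ℝ × X => Φ p.1 p.2) ∧
  (∀ x : X, Φ 0 x = x) ∧
  (∀ s t : ℝ, ∀ x : X, Φ (s + t) x = Φ s (Φ t x)) ∧
  (∀ (g : G) (τ : ℝ) (x : X), Φ τ (g • x) = g • Φ τ x)

def IsFinSubset (G : Type*) {X : Type*} [Group G] [MulAction G X] (B : Set X) : Prop :=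
  {g : G | g • B = B}.Finite ∧ ∀ g : G, ((g • B) ∩ B).Nonempty → g • B = B

/-- The data `a₋(x) ≤ 0 ≤ a₊(x)` (together with some `ε(x) > 0`) required at a point `x`
of a box `B` of length `l` in Definition 2.3. -/
def IsBoxData {X : Type*} (Φ : ℝ → X → X) (B : Set X) (l : ℝ) (x : X) (am ap : ℝ) : Prop :=
  am ≤ 0 ∧ 0 ≤ ap ∧ l = ap - am ∧
  (∀ τ ∈ Set.Icc am ap, Φ τ x ∈ B) ∧
  ∃ ε : ℝ, 0 < ε ∧ ∀ τ ∈ Set.Ioo (am - ε) am ∪ Set.Ioo ap (ap + ε), Φ τ x ∉ B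

/-- A box of length `l`: a compact `Fin`-subset such that every point carries box data. -/
def IsBox (G : Type*) {X : Type*} [Group G] [MulAction G X] [TopologicalSpace X]
    (Φ : ℝ → X → X) (B : Set X) (l : ℝ) : Prop :=
  IsCompact B ∧ IsFinSubset G B ∧ 0 < l ∧ ∀ x ∈ B, ∃ am ap : ℝ, IsBoxData Φ B l x am ap

def flowFixed {X : Type*} (Φ : ℝ → X → X) : Set X := {x | ∀ τ : ℝ, Φ τ x = x}

def IsNonequivariantBox {X : Type*} [TopologicalSpace X]
    (Φ : ℝ → X → X) (B : Set X) (l : ℝ) : Prop :=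
  IsCompact B ∧ 0 < l ∧ ∀ x ∈ B, ∃ am ap : ℝ, IsBoxData Φ B l x am ap

/-- The central slice `S_B = {x ∈ B | a₋(x) + a₊(x) = 0}` of a box `B` of length `l`. -/
def boxSlice {X : Type*} (Φ : ℝ → X → X) (B : Set X) (l : ℝ) : Set X :=
  {x ∈ B | ∃ am ap : ℝ, IsBoxData Φ B l x am ap ∧ am + ap = 0}

section Aux

open Set

variable {X : Type*} {Φ : ℝ → X → X} {B : Set X} {l : ℝ}

theorem boxData_ap_le {y : X} {am ap am' ap' : ℝ}
    (h1 : IsBoxData Φ B l y am ap) (h2 : IsBoxData Φ B l y am' ap') : ap ≤ ap' := by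
  by_contra hlt
  push_neg at hlt  -- ap' < ap
  obtain ⟨ha1, hb1, hl1, hmem1, ε1, hε1, hout1⟩ := h2
  obtain ⟨ha2, hb2, hl2, hmem2, ε2, hε2, hout2⟩ := h1
  set τ := min (ap' + ε1 / 2) ((ap' + ap) / 2) with hτ
  have hτ1 : ap' < τ := lt_min (by linarith) (by linarith)
  have hτ2 : τ < ap' + ε1 := lt_of_le_of_lt (min_le_left _ _) (by linarith)
  have hτ3 : τ ≤ ap := le_trans (min_le_right _ _) (by linarith)
  exact hout1 τ (Or.inr ⟨hτ1, hτ2⟩) (hmem2 τ ⟨by linarith, hτ3⟩)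

theorem boxData_unique {y : X} {am ap am' ap' : ℝ}
    (h1 : IsBoxData Φ B l y am ap) (h2 : IsBoxData Φ B l y am' ap') :
    am = am' ∧ ap = ap' := by
  have h3 := boxData_ap_le h1 h2
  have h4 := boxData_ap_le h2 h1
  have hap : ap = ap' := le_antisymm h3 h4
  constructor
  · have := h1.2.2.1; have := h2.2.2.1; linarith
  · exact hap

theorem IsBoxData.shift (hadd : ∀ s t : ℝ, ∀ x : X, Φ (s + t) x = Φ s (Φ t x))
    {y : X} {am ap w : ℝ} (h : IsBoxData Φ B l y am ap) (hw : w ∈ Icc am ap) :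
    IsBoxData Φ B l (Φ w y) (am - w) (ap - w) := by
  obtain ⟨ha, hb, hl, hmem, ε, hε, hout⟩ := h
  have key : ∀ τ : ℝ, Φ τ (Φ w y) = Φ (τ + w) y := fun τ => (hadd τ w y).symm
  refine ⟨by linarith [hw.1], by linarith [hw.2], by linarith, ?_, ε, hε, ?_⟩
  · intro τ hτ; rw [key]; exact hmem _ ⟨by linarith [hτ.1], by linarith [hτ.2]⟩
  · intro τ hτ; rw [key]; rcases hτ with ⟨h1, h2⟩ | ⟨h1, h2⟩
    · exact hout _ (Or.inl ⟨by linarith, by linarith⟩)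
    · exact hout _ (Or.inr ⟨by linarith, by linarith⟩)

open scoped Classical in
noncomputable def aMfun (Φ : ℝ → X → X) (B : Set X) (l : ℝ) (y : X) : ℝ :=
  if h : ∃ am ap, IsBoxData Φ B l y am ap then h.choose else 0

theorem aMfun_spec {y : X} (h : ∃ am ap, IsBoxData Φ B l y am ap) :
    IsBoxData Φ B l y (aMfun Φ B l y) (aMfun Φ B l y + l) := by
  rw [aMfun, dif_pos h]
  obtain ⟨ap, hap⟩ := h.choose_spec
  have hap' : ap = h.choose + l := by have := hap.2.2.1; linarith
  rwa [hap'] at hap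

theorem aMfun_eq {y : X} {am ap : ℝ} (h : IsBoxData Φ B l y am ap) :
    aMfun Φ B l y = am :=
  (boxData_unique (aMfun_spec ⟨am, ap, h⟩) h).1

variable [TopologicalSpace X]

theorem aMfun_continuity (hcont : Continuous fun p : ℝ × X => Φ p.1 p.2)
    (hBc : IsClosed B) (hdata : ∀ y ∈ B, ∃ am ap, IsBoxData Φ B l y am ap)
    {p : X} (hp : p ∈ B) {η : ℝ} (hη : 0 < η) :
    ∃ U : Set X, IsOpen U ∧ p ∈ U ∧
      ∀ q ∈ U, q ∈ B → |aMfun Φ B l q - aMfun Φ B l p| < η := by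
  obtain ⟨ham, hap, hl, hmem, ε, hε, hout⟩ := aMfun_spec (hdata p hp)
  set am := aMfun Φ B l p with ham_def
  have hminpos : 0 < min ε η := lt_min hε hη
  set τ := am + l + min ε η / 2 with hτdef
  set τ' := am - min ε η / 2 with hτ'def
  have hτout : Φ τ p ∉ B := by
    refine hout τ (Or.inr ⟨by simp only [hτdef]; linarith, ?_⟩)
    have := min_le_left ε η; simp only [hτdef]; linarith
  have hτ'out : Φ τ' p ∉ B := by
    refine hout τ' (Or.inl ⟨?_, by simp only [hτ'def]; linarith⟩)
    have := min_le_left ε η; simp only [hτ'def]; linarith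
  have hΦc : ∀ t : ℝ, Continuous fun q : X => Φ t q := fun t =>
    hcont.comp (continuous_const.prodMk continuous_id)
  refine ⟨(fun q => Φ τ q) ⁻¹' Bᶜ ∩ (fun q => Φ τ' q) ⁻¹' Bᶜ,
    ((hBc.isOpen_compl.preimage (hΦc τ)).inter (hBc.isOpen_compl.preimage (hΦc τ'))),
    ⟨hτout, hτ'out⟩, ?_⟩
  rintro q ⟨hq1, hq2⟩ hqB
  obtain ⟨hamq, hapq, hlq, hmemq, εq, hεq, houtq⟩ := aMfun_spec (hdata q hqB)
  set amq := aMfun Φ B l q with hamq_def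
  have h1 : ¬ (amq ≤ τ ∧ τ ≤ amq + l) := fun h => hq1 (hmemq τ ⟨h.1, h.2⟩)
  have h2 : ¬ (amq ≤ τ' ∧ τ' ≤ amq + l) := fun h => hq2 (hmemq τ' ⟨h.1, h.2⟩)
  have hτpos : 0 < τ := by simp only [hτdef]; linarith
  have hle : amq ≤ τ := le_trans hamq (le_of_lt hτpos)
  have hup : amq + l < τ := by
    by_contra hc; push_neg at hc; exact h1 ⟨hle, hc⟩
  have hτ'neg : τ' < 0 := by simp only [hτ'def]; linarith
  have hle' : τ' ≤ amq + l := le_trans (le_of_lt hτ'neg) (by linarith)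
  have hlow : τ' < amq := by
    by_contra hc; push_neg at hc; exact h2 ⟨hc, hle'⟩
  have hm2 := min_le_right ε η
  rw [abs_lt]
  constructor
  · simp only [hτ'def] at hlow; linarith
  · simp only [hτdef] at hup; linarith

theorem boxData_interior_pos (hcont : Continuous fun p : ℝ × X => Φ p.1 p.2)
    (h0 : ∀ x : X, Φ 0 x = x)
    {p : X} (hp : p ∈ interior B) {am ap : ℝ} (h : IsBoxData Φ B l p am ap) :
    am < 0 ∧ 0 < ap := by
  have hc : Continuous fun t : ℝ => Φ t p :=
    hcont.comp (continuous_id.prodMk continuous_const)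
  have hten : Filter.Tendsto (fun t : ℝ => Φ t p) (nhds 0) (nhds p) := by
    have := hc.continuousAt (x := 0)
    rwa [ContinuousAt, h0 p] at this
  have hev : ∀ᶠ t in nhds (0:ℝ), Φ t p ∈ interior B :=
    hten (isOpen_interior.mem_nhds hp)
  obtain ⟨ι, hι, hball⟩ := Metric.eventually_nhds_iff.mp hev
  obtain ⟨ham, hap, hl, hmem, ε, hε, hout⟩ := h
  have hminpos : 0 < min ε ι := lt_min hε hι
  have hminε := min_le_left ε ι
  have hminι := min_le_right ε ι
  constructor
  · by_contra hc'
    push_neg at hc'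
    have ham0 : am = 0 := le_antisymm ham hc'
    have h1 : Φ (-(min ε ι) / 2) p ∉ B := by
      refine hout _ (Or.inl ⟨?_, ?_⟩) <;> rw [ham0] <;> linarith
    have h2 : Φ (-(min ε ι) / 2) p ∈ interior B := by
      apply hball
      rw [Real.dist_eq, sub_zero, abs_lt]
      constructor <;> linarith
    exact h1 (interior_subset h2)
  · by_contra hc'
    push_neg at hc'
    have hap0 : ap = 0 := le_antisymm hc' hap
    have h1 : Φ (min ε ι / 2) p ∉ B := by
      refine hout _ (Or.inr ⟨?_, ?_⟩) <;> rw [hap0] <;> linarith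
    have h2 : Φ (min ε ι / 2) p ∈ interior B := by
      apply hball
      rw [Real.dist_eq, sub_zero, abs_lt]
      constructor <;> linarith
    exact h1 (interior_subset h2)

end Aux

set_option maxHeartbeats 2000000

/-- Lemma 2.14: if `x` lies in the interior of some non-equivariant box, then there is an
(equivariant) box `B` with `G_B = G_{S_B} = G_x`, `x ∈ S_B ∩ B°` and connected
central slice `S_B`. -/
theorem equivariant_box_from_nonequivariant_box
    (G X : Type*) [Group G] [TopologicalSpace X] [TopologicalSpace.MetrizableSpace X]
    [MulAction G X] [ContinuousConstSMul G X]
    (hproper : IsProperAction G X) (hcocompact : IsCocompactAction G X)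
    (Φ : ℝ → X → X) (hflow : IsEquivariantFlow G Φ)
    (hlc : LocallyConnectedSpace ↥((flowFixed Φ)ᶜ))
    (x : X)
    (hx : ∃ (B : Set X) (l : ℝ), IsNonequivariantBox Φ B l ∧ x ∈ interior B) :
    ∃ (B : Set X) (l : ℝ), IsBox G Φ B l ∧
      {g : G | g • B = B} = {g : G | g • x = x} ∧
      {g : G | g • boxSlice Φ B l = boxSlice Φ B l} = {g : G | g • x = x} ∧
      x ∈ boxSlice Φ B l ∩ interior B ∧
      IsConnected (boxSlice Φ B l) := by
  classical
  obtain ⟨hcont, h0, hadd, hequiv⟩ := hflow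
  obtain ⟨B', l', ⟨hB'comp, hl', hB'data⟩, hxint⟩ := hx
  letI : MetricSpace X := TopologicalSpace.metrizableSpaceMetric X
  -- basic flow facts
  have hΦt : ∀ t : ℝ, Continuous fun q : X => Φ t q := fun t =>
    hcont.comp (continuous_const.prodMk continuous_id)
  have hcancel : ∀ (u v : ℝ) (q : X), Φ u (Φ v q) = Φ (u + v) q := fun u v q =>
    (hadd u v q).symm
  have hinv : ∀ (v : ℝ) (q : X), Φ (-v) (Φ v q) = q := fun v q => by
    rw [hcancel, neg_add_cancel, h0]
  have hB'closed : IsClosed B' := hB'comp.isClosed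
  have hxB' : x ∈ B' := interior_subset hxint
  -- the function a₋ on B'
  set aM : X → ℝ := aMfun Φ B' l' with haM
  have haMspec : ∀ y ∈ B', IsBoxData Φ B' l' y (aM y) (aM y + l') := fun y hy =>
    aMfun_spec (hB'data y hy)
  set a := aM x with ha
  have hax : a < 0 ∧ 0 < a + l' := boxData_interior_pos hcont h0 hxint (haMspec x hxB')
  set m₀ := min (a + l') (-a) with hm₀
  have hm₀pos : 0 < m₀ := lt_min hax.2 (by linarith [hax.1])
  have hm₀a : m₀ ≤ -a := min_le_right _ _
  have hm₀b : m₀ ≤ a + l' := min_le_left _ _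
  -- the isotropy group of x
  set Gx : Set G := {g : G | g • x = x} with hGxdef
  obtain ⟨U₀, hU₀open, hxU₀, hF₀⟩ := hproper x
  have hGxinv : ∀ g ∈ Gx, g⁻¹ • x = x := by
    intro g hg
    have hg' : g • x = x := hg
    exact inv_smul_eq_iff.mpr hg'.symm
  have hGxfin : Gx.Finite := by
    refine hF₀.subset fun g hg => ⟨x, ?_, hxU₀⟩
    rw [Set.mem_smul_set_iff_inv_smul_mem, hGxinv g hg]
    exact hxU₀
  have h1Gx : (1:G) ∈ Gx := by simp [hGxdef]
  have hGxmul : ∀ g ∈ Gx, ∀ h ∈ Gx, (g * h) • x = x := fun g hg h hh => by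
    rw [mul_smul, hh, hg]
  set T : Finset G := hGxfin.toFinset with hT
  have hmemT : ∀ g : G, g ∈ T ↔ g • x = x := fun g => Set.Finite.mem_toFinset _
  have h1T : (1:G) ∈ T := (hmemT 1).mpr h1Gx
  have hTcard : (0:ℝ) < (T.card : ℝ) := by
    have : 0 < T.card := Finset.card_pos.mpr ⟨1, h1T⟩
    exact_mod_cast this
  -- the neighborhood W₁ on which all a₋ ∘ g⁻¹ are close to a
  obtain ⟨U, hUopen, hxU, hUprop⟩ :=
    aMfun_continuity hcont hB'closed hB'data hxB' (show (0:ℝ) < m₀/100 by linarith)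
  set W₁ : Set X := ⋂ g ∈ T, g • (U ∩ interior B') with hW₁def
  have hW₁open : IsOpen W₁ :=
    isOpen_biInter_finset fun g _ => (hUopen.inter isOpen_interior).smul g
  have hxW₁ : x ∈ W₁ := by
    refine Set.mem_iInter₂.mpr fun g hg => ?_
    rw [Set.mem_smul_set_iff_inv_smul_mem, hGxinv g ((hmemT g).mp hg)]
    exact ⟨hxU, hxint⟩
  have hW₁spec : ∀ g ∈ T, ∀ q ∈ W₁, g⁻¹ • q ∈ U ∩ interior B' := by
    intro g hg q hq
    have := Set.mem_iInter₂.mp hq g hg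
    exact Set.mem_smul_set_iff_inv_smul_mem.mp this
  have hW₁B : ∀ g ∈ T, ∀ q ∈ W₁, g⁻¹ • q ∈ B' ∧ |aM (g⁻¹ • q) - a| < m₀/100 := by
    intro g hg q hq
    obtain ⟨h1, h2⟩ := hW₁spec g hg q hq
    exact ⟨interior_subset h2, hUprop _ h1 (interior_subset h2)⟩
  -- the averaged central-time function s and retraction r
  set s : X → ℝ := fun q => (∑ g ∈ T, aM (g⁻¹ • q)) / T.card with hsdef
  have hsinv : ∀ g ∈ Gx, ∀ q : X, s (g • q) = s q := by
    intro g hg q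
    have hre : ∑ h ∈ T, aM (h⁻¹ • (g • q)) = ∑ h ∈ T, aM (h⁻¹ • q) := by
      refine Finset.sum_nbij' (fun h => g⁻¹ * h) (fun h => g * h) ?_ ?_ ?_ ?_ ?_
      · intro h hh
        refine (hmemT _).mpr ?_
        rw [mul_smul, (hmemT h).mp hh, hGxinv g hg]
      · intro h hh
        refine (hmemT _).mpr ?_
        rw [mul_smul, (hmemT h).mp hh]
        exact hg
      · intro h _; group
      · intro h _; group
      · intro h _
        congr 1
        rw [← mul_smul]
        congr 1
        group
    rw [hsdef]
    simp only
    rw [hre]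
  have hsx : s x = a := by
    rw [hsdef]
    simp only
    have : ∀ g ∈ T, aM (g⁻¹ • x) = a := fun g hg => by
      rw [hGxinv g ((hmemT g).mp hg)]
    rw [Finset.sum_congr rfl this, Finset.sum_const, nsmul_eq_mul, mul_comm,
      mul_div_assoc, div_self (ne_of_gt hTcard), mul_one]
  have hshift : ∀ q ∈ W₁, ∀ w : ℝ, |w| ≤ m₀/2 → s (Φ w q) = s q - w := by
    intro q hq w hw
    rw [abs_le] at hw
    have hterm : ∀ g ∈ T, aM (g⁻¹ • Φ w q) = aM (g⁻¹ • q) - w := by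
      intro g hg
      obtain ⟨hmem, hclose⟩ := hW₁B g hg q hq
      rw [abs_lt] at hclose
      have hd := haMspec _ hmem
      have hwmem : w ∈ Set.Icc (aM (g⁻¹ • q)) (aM (g⁻¹ • q) + l') := by
        rw [Set.mem_Icc]
        constructor
        · linarith [hclose.1, hclose.2, hw.1, hm₀pos, hm₀a]
        · linarith [hclose.1, hclose.2, hw.2, hm₀pos, hm₀b]
      have hsh := hd.shift hadd hwmem
      rw [hequiv g⁻¹ w q] at hsh
      exact aMfun_eq hsh
    rw [hsdef]
    simp only
    rw [Finset.sum_congr rfl hterm, Finset.sum_sub_distrib, Finset.sum_const, nsmul_eq_mul,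
      sub_div, mul_comm, mul_div_assoc, div_self (ne_of_gt hTcard), mul_one]
  have hsCont : ∀ q₀ ∈ W₁, ContinuousAt s q₀ := by
    intro q₀ hq₀
    apply ContinuousAt.div_const
    apply tendsto_finset_sum
    intro g hg
    have hgq₀ : g⁻¹ • q₀ ∈ U ∩ interior B' := hW₁spec g hg q₀ hq₀
    rw [Metric.tendsto_nhds]
    intro η hη
    obtain ⟨U', hU'open, hU'mem, hU'prop⟩ :=
      aMfun_continuity hcont hB'closed hB'data (interior_subset hgq₀.2) hη
    have hopen : IsOpen (g • (U' ∩ interior B')) := (hU'open.inter isOpen_interior).smul g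
    have hq₀mem : q₀ ∈ g • (U' ∩ interior B') := by
      rw [Set.mem_smul_set_iff_inv_smul_mem]
      exact ⟨hU'mem, hgq₀.2⟩
    filter_upwards [hopen.mem_nhds hq₀mem] with q hq
    rw [Set.mem_smul_set_iff_inv_smul_mem] at hq
    rw [Real.dist_eq]
    exact hU'prop _ hq.1 (interior_subset hq.2)
  set r : X → X := fun q => Φ (s q - a) q with hrdef
  have hrx : r x = x := by rw [hrdef]; simp only [hsx, sub_self, h0]
  have hrCont : ∀ q₀ ∈ W₁, ContinuousAt r q₀ := by
    intro q₀ hq₀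
    have h1 : ContinuousAt (fun q => ((s q - a : ℝ), q)) q₀ :=
      ((hsCont q₀ hq₀).sub continuousAt_const).prodMk continuousAt_id
    exact (hcont.continuousAt).comp h1
  have hrequiv : ∀ g ∈ Gx, ∀ q : X, r (g • q) = g • r q := by
    intro g hg q
    rw [hrdef]
    simp only
    rw [hsinv g hg q, hequiv]
  -- x is not flow-fixed
  have hffclosed : IsClosed (flowFixed Φ) := by
    have heq : flowFixed Φ = ⋂ τ : ℝ, {q : X | Φ τ q = q} := by
      ext q; simp [flowFixed, Set.mem_iInter]
    rw [heq]
    exact isClosed_iInter fun τ => isClosed_eq (hΦt τ) continuous_id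
  have hxnf : x ∈ (flowFixed Φ)ᶜ := by
    intro hxf
    obtain ⟨ham, hap, hl, hmem, ε, hε, hout⟩ := haMspec x hxB'
    exact hout (a + l' + ε/2) (Or.inr ⟨by linarith [hax.2], by linarith⟩)
      (by rw [hxf _]; exact hxB')
  have hffinv : ∀ (g : G) (q : X), q ∈ flowFixed Φ → g • q ∈ flowFixed Φ := by
    intro g q hq τ
    rw [hequiv, hq τ]
  -- scale for the tube condition
  obtain ⟨c₁, hc₁pos, hc₁⟩ : ∃ c > 0, ∀ (u : ℝ) (q : X), |u| < c → dist q x < c →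
      Φ u q ∈ U₀ := by
    have hP : IsOpen ((fun p : ℝ × X => Φ p.1 p.2) ⁻¹' U₀) := hU₀open.preimage hcont
    have hmemP : ((0:ℝ), x) ∈ (fun p : ℝ × X => Φ p.1 p.2) ⁻¹' U₀ := by
      simp only [Set.mem_preimage, h0]; exact hxU₀
    obtain ⟨s1, t1, hs1, ht1, h0s1, hxt1, hsub⟩ := isOpen_prod_iff.mp hP 0 x hmemP
    obtain ⟨ca, hca, hba⟩ := Metric.isOpen_iff.mp hs1 0 h0s1
    obtain ⟨cb', hcb', hbb⟩ := Metric.isOpen_iff.mp ht1 x hxt1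
    refine ⟨min ca cb', lt_min hca hcb', fun u q hu hq => ?_⟩
    have hm : ((u:ℝ), q) ∈ (fun p : ℝ × X => Φ p.1 p.2) ⁻¹' U₀ := by
      apply hsub
      refine Set.mem_prod.mpr ⟨hba ?_, hbb ?_⟩
      · rw [Metric.mem_ball, Real.dist_0_eq_abs]
        exact lt_of_lt_of_le hu (min_le_left _ _)
      · rw [Metric.mem_ball]
        exact lt_of_lt_of_le hq (min_le_right _ _)
    exact hm
  -- separation constant
  obtain ⟨c₂, hc₂pos, hc₂⟩ : ∃ c > 0, ∀ g ∈ hF₀.toFinset, ¬ g • x = x →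
      ∀ (u : ℝ) (q z : X), |u| < c → dist q x < c → dist z x < c → Φ u q ≠ g • z := by
    have hone : ∀ g : G, ¬ g • x = x →
        ∃ c, 0 < c ∧ ∀ (u : ℝ) (q z : X), |u| < c → dist q x < c → dist z x < c →
          Φ u q ≠ g • z := by
      intro g hgx
      have hψ : Continuous (fun p : ℝ × X × X => (Φ p.1 p.2.1, g • p.2.2)) := by
        refine Continuous.prodMk ?_ ?_
        · exact hcont.comp (continuous_fst.prodMk (continuous_fst.comp continuous_snd))
        · exact (continuous_const_smul g).comp (continuous_snd.comp continuous_snd)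
      have hopen : IsOpen ((fun p : ℝ × X × X => (Φ p.1 p.2.1, g • p.2.2)) ⁻¹'
          (Set.diagonal X)ᶜ) := (isClosed_diagonal.isOpen_compl).preimage hψ
      have hmem : ((0:ℝ), x, x) ∈ (fun p : ℝ × X × X => (Φ p.1 p.2.1, g • p.2.2)) ⁻¹'
          (Set.diagonal X)ᶜ := by
        simp only [Set.mem_preimage, h0, Set.mem_compl_iff, Set.mem_diagonal_iff]
        exact fun h => hgx h.symm
      obtain ⟨cg, hcg, hball⟩ := Metric.isOpen_iff.mp hopen (0, x, x) hmem
      refine ⟨cg, hcg, fun u q z hu hq hz heq => ?_⟩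
      have hmb : ((u:ℝ), q, z) ∈ Metric.ball ((0:ℝ), x, x) cg := by
        rw [Metric.mem_ball, Prod.dist_eq, Prod.dist_eq]
        apply max_lt
        · rwa [Real.dist_0_eq_abs]
        · exact max_lt hq hz
      have h2 := hball hmb
      rw [Set.mem_preimage, Set.mem_compl_iff, Set.mem_diagonal_iff] at h2
      exact h2 heq
    choose! f hfpos hf using hone
    set Fs := hF₀.toFinset.filter (fun g => ¬ g • x = x) with hFs
    rcases Fs.eq_empty_or_nonempty with hFse | hFsne
    · refine ⟨1, one_pos, fun g hg hgx => ?_⟩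
      exfalso
      have hgin : g ∈ Fs := Finset.mem_filter.mpr ⟨hg, hgx⟩
      rw [hFse] at hgin
      exact absurd hgin (Finset.notMem_empty g)
    · refine ⟨Fs.inf' hFsne f, ?_, ?_⟩
      · show (0:ℝ) < Fs.inf' hFsne f
        rw [Finset.lt_inf'_iff]
        intro g hg
        exact hfpos g (Finset.mem_filter.mp hg).2
      · intro g hg hgx u q z hu hq hz
        have hle : Fs.inf' hFsne f ≤ f g := Finset.inf'_le f (Finset.mem_filter.mpr ⟨hg, hgx⟩)
        exact hf g hgx u q z (lt_of_lt_of_le hu hle) (lt_of_lt_of_le hq hle)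
          (lt_of_lt_of_le hz hle)
  -- radii
  obtain ⟨ρ₁, hρ₁pos, hρ₁⟩ : ∃ ε > 0, Metric.ball x ε ⊆ W₁ ∩ interior B' ∩ U₀ :=
    Metric.isOpen_iff.mp ((hW₁open.inter isOpen_interior).inter hU₀open) x ⟨⟨hxW₁, hxint⟩, hxU₀⟩
  have hc₁₂ : 0 < min c₁ c₂ := lt_min hc₁pos hc₂pos
  set ρ := min (min c₁ c₂ / 4) (ρ₁ / 2) with hρdef
  have hρpos : 0 < ρ := lt_min (by linarith) (by linarith)
  set δ := min (min c₁ c₂ / 8) (m₀ / 8) with hδdef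
  have hδpos : 0 < δ := lt_min (by linarith) (by linarith)
  have hδm₀ : δ ≤ m₀ / 8 := min_le_right _ _
  have hδc : δ ≤ min c₁ c₂ / 8 := min_le_left _ _
  have hρc : ρ ≤ min c₁ c₂ / 4 := min_le_left _ _
  have hρρ₁ : ρ ≤ ρ₁ / 2 := min_le_right _ _
  have hcb : Metric.closedBall x ρ ⊆ W₁ ∩ interior B' ∩ U₀ := by
    intro q hq
    apply hρ₁
    rw [Metric.mem_ball]
    rw [Metric.mem_closedBall] at hq
    linarith
  have htube : ∀ (u : ℝ) (q : X), |u| ≤ 2*δ → dist q x ≤ ρ → Φ u q ∈ U₀ := by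
    intro u q hu hq
    refine hc₁ u q ?_ ?_
    · calc |u| ≤ 2*δ := hu
        _ < c₁ := by
          have := min_le_left c₁ c₂; linarith
    · calc dist q x ≤ ρ := hq
        _ < c₁ := by
          have := min_le_left c₁ c₂; linarith
  have hsep : ∀ g : G, ((g • U₀) ∩ U₀).Nonempty → ¬ g • x = x →
      ∀ (u : ℝ) (q z : X), |u| ≤ 2*δ → dist q x ≤ ρ → dist z x ≤ ρ → Φ u q ≠ g • z := by
    intro g hg hgx u q z hu hq hz
    have h1 := min_le_right c₁ c₂
    refine hc₂ g (hF₀.mem_toFinset.mpr hg) hgx u q z ?_ ?_ ?_ <;> linarith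
  -- the compact G_x-invariant sets K', O, W'
  have hsmul_compact : ∀ (g : G) (S : Set X), IsCompact S → IsCompact (g • S) := by
    intro g S hS
    rw [← Set.image_smul]
    exact hS.image (continuous_const_smul g)
  set K : Set X := Metric.closedBall x ρ with hKdef
  have hKB' : K ⊆ B' := fun q hq => interior_subset (hcb hq).1.2
  have hKW₁ : K ⊆ W₁ := fun q hq => (hcb hq).1.1
  have hKU₀ : K ⊆ U₀ := fun q hq => (hcb hq).2
  have hKcomp : IsCompact K := hB'comp.of_isClosed_subset Metric.isClosed_closedBall hKB'
  set K' : Set X := ⋂ g ∈ T, g • K with hK'def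
  have hK'closed : IsClosed K' :=
    isClosed_biInter fun g _ => (hsmul_compact g K hKcomp).isClosed
  have hK'sub : K' ⊆ K := by
    intro q hq
    have := Set.mem_iInter₂.mp hq 1 h1T
    rwa [one_smul] at this
  have hK'comp : IsCompact K' := hKcomp.of_isClosed_subset hK'closed hK'sub
  have hbiinv : ∀ (V : Set X) (g : G), g ∈ Gx → ∀ q, q ∈ (⋂ h ∈ T, h • V) →
      g • q ∈ (⋂ h ∈ T, h • V) := by
    intro V g hg q hq
    refine Set.mem_iInter₂.mpr fun h hh => ?_
    rw [Set.mem_smul_set_iff_inv_smul_mem, ← mul_smul]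
    have hmem : (g⁻¹ * h) ∈ T := by
      refine (hmemT _).mpr ?_
      rw [mul_smul, (hmemT h).mp hh, hGxinv g hg]
    have hmm := Set.mem_iInter₂.mp hq _ hmem
    rw [Set.mem_smul_set_iff_inv_smul_mem] at hmm
    rwa [mul_inv_rev, inv_inv] at hmm
  set O : Set X := ⋂ g ∈ T, g • Metric.ball x ρ with hOdef
  have hOopen : IsOpen O := isOpen_biInter_finset fun g _ => Metric.isOpen_ball.smul g
  have hxO : x ∈ O := by
    refine Set.mem_iInter₂.mpr fun g hg => ?_
    rw [Set.mem_smul_set_iff_inv_smul_mem, hGxinv g ((hmemT g).mp hg)]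
    exact Metric.mem_ball_self hρpos
  have hOK' : O ⊆ K' := by
    intro q hq
    refine Set.mem_iInter₂.mpr fun g hg => ?_
    have hmm := Set.mem_iInter₂.mp hq g hg
    rw [Set.mem_smul_set_iff_inv_smul_mem] at hmm ⊢
    exact Metric.ball_subset_closedBall hmm
  set W' : Set X := ⋂ g ∈ T, g • W₁ with hW'def
  have hW'open : IsOpen W' := isOpen_biInter_finset fun g _ => hW₁open.smul g
  have hxW' : x ∈ W' := by
    refine Set.mem_iInter₂.mpr fun g hg => ?_
    rw [Set.mem_smul_set_iff_inv_smul_mem, hGxinv g ((hmemT g).mp hg)]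
    exact hxW₁
  have hW'W₁ : W' ⊆ W₁ := by
    intro q hq
    have := Set.mem_iInter₂.mp hq 1 h1T
    rwa [one_smul] at this
  -- the open invariant set E
  set A : Set X := {q | q ∈ W' ∧ |s q - a| < δ ∧ r q ∈ O} with hAdef
  have hAopen : IsOpen A := by
    rw [isOpen_iff_mem_nhds]
    rintro q₀ ⟨h1, h2, h3⟩
    have hq₀W₁ : q₀ ∈ W₁ := hW'W₁ h1
    have hoball : IsOpen {y : ℝ | |y - a| < δ} :=
      isOpen_lt (continuous_abs.comp (continuous_id.sub continuous_const)) continuous_const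
    have he1 : ∀ᶠ q in nhds q₀, |s q - a| < δ := (hsCont q₀ hq₀W₁) (hoball.mem_nhds h2)
    have he2 : ∀ᶠ q in nhds q₀, r q ∈ O := (hrCont q₀ hq₀W₁) (hOopen.mem_nhds h3)
    filter_upwards [hW'open.mem_nhds h1, he1, he2] with q hq1 hq2 hq3
    exact ⟨hq1, hq2, hq3⟩
  set E : Set X := (flowFixed Φ)ᶜ ∩ A with hEdef
  have hEopen : IsOpen E := hffclosed.isOpen_compl.inter hAopen
  have hxE : x ∈ E := by
    refine ⟨hxnf, hxW', ?_, ?_⟩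
    · rw [hsx, sub_self, abs_zero]; exact hδpos
    · rw [hrx]; exact hxO
  have hEinv : ∀ g ∈ Gx, ∀ q ∈ E, g • q ∈ E := by
    rintro g hg q ⟨hq1, hq2, hq3, hq4⟩
    refine ⟨?_, hbiinv _ g hg q hq2, ?_, ?_⟩
    · intro hc
      apply hq1
      have := hffinv g⁻¹ _ hc
      rwa [inv_smul_smul] at this
    · rwa [hsinv g hg]
    · rw [hrequiv g hg]
      exact hbiinv _ g hg _ hq4
  -- the connected component D of x in E
  have hYopen : IsOpen ((flowFixed Φ)ᶜ : Set X) := hffclosed.isOpen_compl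
  set EY : Set ↥((flowFixed Φ)ᶜ) := Subtype.val ⁻¹' E with hEYdef
  have hEYopen : IsOpen EY := hEopen.preimage continuous_subtype_val
  set xY : ↥((flowFixed Φ)ᶜ) := ⟨x, hxnf⟩ with hxYdef
  have hxEY : xY ∈ EY := hxE
  set DY : Set ↥((flowFixed Φ)ᶜ) := connectedComponentIn EY xY with hDYdef
  have hDYopen : IsOpen DY := hEYopen.connectedComponentIn
  set D : Set X := Subtype.val '' DY with hDdef
  have hDopen : IsOpen D := hYopen.isOpenMap_subtype_val DY hDYopen
  have hxD : x ∈ D := ⟨xY, mem_connectedComponentIn hxEY, rfl⟩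
  have hDE : D ⊆ E := by
    rintro q ⟨qY, hqY, rfl⟩
    exact connectedComponentIn_subset EY xY hqY
  have hDpre : IsPreconnected D :=
    (isPreconnected_connectedComponentIn).image _ continuous_subtype_val.continuousOn
  have hDmax : ∀ S : Set X, IsPreconnected S → x ∈ S → S ⊆ E → S ⊆ D := by
    intro S hSpre hxS hSE
    have hSY : S ⊆ ((flowFixed Φ)ᶜ : Set X) := fun q hq => (hSE hq).1
    have himg : Subtype.val '' (Subtype.val ⁻¹' S : Set ↥((flowFixed Φ)ᶜ)) = S := by
      rw [Subtype.image_preimage_coe]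
      exact Set.inter_eq_self_of_subset_right hSY
    have hSYpre : IsPreconnected (Subtype.val ⁻¹' S : Set ↥((flowFixed Φ)ᶜ)) := by
      rw [← Topology.IsInducing.subtypeVal.isPreconnected_image]
      rwa [himg]
    have hsub : (Subtype.val ⁻¹' S : Set ↥((flowFixed Φ)ᶜ)) ⊆ EY := fun q hq => hSE hq
    have hDsub : (Subtype.val ⁻¹' S : Set ↥((flowFixed Φ)ᶜ)) ⊆ DY :=
      hSYpre.subset_connectedComponentIn (Set.mem_preimage.mpr hxS) hsub
    intro q hq
    exact ⟨⟨q, hSY hq⟩, hDsub hq, rfl⟩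
  have hDinv : ∀ g ∈ Gx, ∀ q ∈ D, g • q ∈ D := by
    intro g hg q hq
    have himg : (fun p : X => g • p) '' D ⊆ D := by
      apply hDmax
      · exact hDpre.image _ (continuous_const_smul g).continuousOn
      · exact ⟨x, hxD, hg⟩
      · rintro p ⟨p', hp', rfl⟩
        exact hEinv g hg p' (hDE hp')
    exact himg ⟨q, hq, rfl⟩
  -- the slice N
  set N : Set X := closure (r '' D) with hNdef
  have hrD_O : r '' D ⊆ O := by
    rintro p ⟨q, hq, rfl⟩
    exact (hDE hq).2.2.2
  have hrD_s : ∀ p ∈ r '' D, s p = a := by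
    rintro p ⟨q, hq, rfl⟩
    obtain ⟨hq1, hq2, hq3, hq4⟩ := hDE hq
    have hqW₁ : q ∈ W₁ := hW'W₁ hq2
    have habs : |s q - a| ≤ m₀ / 2 := le_of_lt (lt_of_lt_of_le hq3 (by linarith))
    have hsh := hshift q hqW₁ (s q - a) habs
    rw [hrdef]
    simp only
    rw [hsh]
    ring
  have hNK' : N ⊆ K' := closure_minimal (fun p hp => hOK' (hrD_O hp)) hK'closed
  have hNK : N ⊆ K := fun p hp => hK'sub (hNK' hp)
  have hNW₁ : N ⊆ W₁ := fun p hp => hKW₁ (hNK hp)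
  have hNcomp : IsCompact N := hK'comp.of_isClosed_subset isClosed_closure hNK'
  have hNs : ∀ p ∈ N, s p = a := by
    intro p hp
    have hcw : ContinuousWithinAt s (r '' D) p :=
      (hsCont p (hNW₁ hp)).continuousWithinAt
    have hmem := hcw.mem_closure_image hp
    have hsub : s '' (r '' D) ⊆ {a} := by
      rintro y ⟨p', hp', rfl⟩
      exact hrD_s p' hp'
    have hclo := (closure_minimal hsub isClosed_singleton) hmem
    simpa using hclo
  have hxN : x ∈ N := subset_closure ⟨x, hxD, hrx⟩
  have hNconn : IsConnected N := by
    refine IsConnected.closure ⟨⟨x, ⟨x, hxD, hrx⟩⟩, ?_⟩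
    exact hDpre.image _ (fun q hq => (hrCont q (hW'W₁ (hDE hq).2.1)).continuousWithinAt)
  have hrDinv : ∀ g ∈ Gx, (fun q : X => g • q) '' (r '' D) = r '' D := by
    have himg : ∀ g ∈ Gx, (fun q : X => g • q) '' (r '' D) ⊆ r '' D := by
      intro g hg
      rintro p ⟨p', ⟨q, hq, rfl⟩, rfl⟩
      exact ⟨g • q, hDinv g hg q hq, hrequiv g hg q⟩
    intro g hg
    refine Set.Subset.antisymm (himg g hg) ?_
    intro p hp
    have hginv : g⁻¹ ∈ Gx := by
      show g⁻¹ • x = x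
      exact hGxinv g hg
    exact ⟨g⁻¹ • p, himg g⁻¹ hginv ⟨p, hp, rfl⟩, smul_inv_smul g p⟩
  have hNinv : ∀ g ∈ Gx, g • N = N := by
    intro g hg
    calc g • N = (fun q : X => g • q) '' closure (r '' D) := by
          rw [← Set.image_smul]
      _ = closure ((fun q : X => g • q) '' (r '' D)) := (Homeomorph.smul g).image_closure _
      _ = N := by rw [hrDinv g hg]
  -- transversality of the slice N
  have htrans : ∀ y ∈ N, ∀ z ∈ N, ∀ w : ℝ, |w| ≤ m₀/2 → Φ w y = z → w = 0 ∧ y = z := by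
    intro y hy z hz w hw heq
    have h1 : s z = s y - w := by rw [← heq]; exact hshift y (hNW₁ hy) w hw
    rw [hNs y hy, hNs z hz] at h1
    have hw0 : w = 0 := by linarith
    exact ⟨hw0, by rw [← heq, hw0, h0]⟩
  -- the box B
  set Bx : Set X := (fun p : ℝ × X => Φ p.1 p.2) '' (Set.Icc (-δ) δ ×ˢ N) with hBxdef
  have hBxcomp : IsCompact Bx := ((isCompact_Icc).prod hNcomp).image hcont
  have hmemBx : ∀ p : X, p ∈ Bx ↔ ∃ σ ∈ Set.Icc (-δ) δ, ∃ y ∈ N, Φ σ y = p := by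
    intro p
    constructor
    · rintro ⟨⟨σ, y⟩, ⟨hσ, hy⟩, rfl⟩
      exact ⟨σ, hσ, y, hy, rfl⟩
    · rintro ⟨σ, hσ, y, hy, rfl⟩
      exact ⟨(σ, y), ⟨hσ, hy⟩, rfl⟩
  have hNBx : N ⊆ Bx := fun y hy =>
    (hmemBx y).mpr ⟨0, ⟨by linarith, by linarith⟩, y, hy, h0 y⟩
  have hxBx : x ∈ Bx := hNBx hxN
  have hrel : ∀ (u v : ℝ) (y z : X), Φ u y = Φ v z → z = Φ (u - v) y := by
    intro u v y z heq
    have h4 := congrArg (Φ (-v)) heq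
    rw [hinv, hcancel] at h4
    have h5 : -v + u = u - v := by ring
    rw [h5] at h4
    exact h4.symm
  -- box data for points of Bx
  have hdataBx : ∀ σ ∈ Set.Icc (-δ) δ, ∀ y ∈ N,
      IsBoxData Φ Bx (2*δ) (Φ σ y) (-δ - σ) (δ - σ) := by
    intro σ hσ y hy
    obtain ⟨hσ1, hσ2⟩ := hσ
    refine ⟨by linarith, by linarith, by ring, ?_, δ, hδpos, ?_⟩
    · intro τ hτ
      rw [hcancel]
      exact (hmemBx _).mpr ⟨τ + σ, ⟨by linarith [hτ.1], by linarith [hτ.2]⟩, y, hy, rfl⟩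
    · intro τ hτ hmem
      rw [hcancel] at hmem
      obtain ⟨v, hv, z, hz, heq⟩ := (hmemBx _).mp hmem
      have hzz := hrel (τ + σ) v y z heq.symm
      obtain ⟨hv1, hv2⟩ := hv
      have habs : |(τ + σ) - v| ≤ m₀/2 := by
        rw [abs_le]
        rcases hτ with ⟨ht1, ht2⟩ | ⟨ht1, ht2⟩ <;> constructor <;>
          linarith [hδm₀, hm₀pos]
      obtain ⟨hw0, -⟩ := htrans y hy z hz _ habs hzz.symm
      rcases hτ with ⟨ht1, ht2⟩ | ⟨ht1, ht2⟩ <;> linarith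
  have hdataAll : ∀ p ∈ Bx, ∃ am ap, IsBoxData Φ Bx (2*δ) p am ap := by
    intro p hp
    obtain ⟨σ, hσ, y, hy, rfl⟩ := (hmemBx p).mp hp
    exact ⟨-δ - σ, δ - σ, hdataBx σ hσ y hy⟩
  -- main group claim
  have hmain : ∀ g : G, ((g • Bx) ∩ Bx).Nonempty → g • x = x := by
    rintro g ⟨p, hp1, hp2⟩
    rw [Set.mem_smul_set_iff_inv_smul_mem] at hp1
    obtain ⟨σ, hσ, z, hz, heqz⟩ := (hmemBx _).mp hp1
    obtain ⟨τ, hτ, y, hy, heqy⟩ := (hmemBx p).mp hp2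
    have hp' : p = g • Φ σ z := by rw [heqz, smul_inv_smul]
    have heq2 : Φ τ y = Φ σ (g • z) := by rw [heqy, hp', hequiv]
    have hgz : g • z = Φ (τ - σ) y := hrel τ σ y (g • z) heq2
    by_contra hgx
    have hzρ : dist z x ≤ ρ := Metric.mem_closedBall.mp (hNK hz)
    have hyρ : dist y x ≤ ρ := Metric.mem_closedBall.mp (hNK hy)
    have habs : |τ - σ| ≤ 2*δ := by
      rw [abs_le]
      obtain ⟨h1, h2⟩ := hσ
      obtain ⟨h3, h4⟩ := hτ
      constructor <;> linarith
    have hgzU₀ : g • z ∈ U₀ := by rw [hgz]; exact htube _ y habs hyρ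
    have hzU₀ : z ∈ U₀ := hKU₀ (hNK hz)
    have hne : ((g • U₀) ∩ U₀).Nonempty := ⟨g • z, ⟨z, hzU₀, rfl⟩, hgzU₀⟩
    exact hsep g hne hgx (τ - σ) y z habs hyρ hzρ hgz.symm
  have hGxBx : ∀ g ∈ Gx, g • Bx = Bx := by
    have hsub : ∀ g ∈ Gx, g • Bx ⊆ Bx := by
      intro g hg p hp
      rw [Set.mem_smul_set] at hp
      obtain ⟨q, hq, rfl⟩ := hp
      obtain ⟨σ, hσ, y, hy, rfl⟩ := (hmemBx q).mp hq
      rw [← hequiv]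
      refine (hmemBx _).mpr ⟨σ, hσ, g • y, ?_, rfl⟩
      rw [← hNinv g hg]
      exact ⟨y, hy, rfl⟩
    intro g hg
    refine Set.Subset.antisymm (hsub g hg) ?_
    intro p hp
    have hginv : g⁻¹ ∈ Gx := by
      show g⁻¹ • x = x
      exact hGxinv g hg
    have hmem := hsub g⁻¹ hginv ⟨p, hp, rfl⟩
    exact ⟨g⁻¹ • p, hmem, smul_inv_smul g p⟩
  -- the central slice of Bx is N
  have hslice : boxSlice Φ Bx (2*δ) = N := by
    apply Set.Subset.antisymm
    · rintro p ⟨hpB, am, ap, hd, hsum⟩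
      obtain ⟨σ, hσ, y, hy, rfl⟩ := (hmemBx p).mp hpB
      obtain ⟨h1, h2⟩ := boxData_unique hd (hdataBx σ hσ y hy)
      have hσ0 : σ = 0 := by rw [h1, h2] at hsum; linarith
      rw [hσ0, h0]
      exact hy
    · intro y hy
      refine ⟨hNBx hy, -δ, δ, ?_, by ring⟩
      have hD0 := hdataBx 0 ⟨by linarith, by linarith⟩ y hy
      rw [h0] at hD0
      simpa using hD0
  have hDBx : D ⊆ Bx := by
    intro q hq
    obtain ⟨hq1, hq2, hq3, hq4⟩ := hDE hq
    refine (hmemBx q).mpr ⟨a - s q, ?_, r q, subset_closure ⟨q, hq, rfl⟩, ?_⟩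
    · rw [abs_lt] at hq3
      rw [Set.mem_Icc]
      constructor <;> linarith [hq3.1, hq3.2]
    · rw [hrdef]
      simp only
      rw [hcancel]
      have hzero : a - s q + (s q - a) = 0 := by ring
      rw [hzero, h0]
  -- conclusion
  refine ⟨Bx, 2*δ, ⟨hBxcomp, ⟨?_, ?_⟩, by linarith, hdataAll⟩, ?_, ?_, ⟨?_, ?_⟩, ?_⟩
  · refine hGxfin.subset fun g hg => ?_
    exact hmain g ⟨x, by rw [Set.mem_setOf_eq] at hg; rw [hg]; exact hxBx, hxBx⟩
  · intro g hgne
    exact hGxBx g (hmain g hgne)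
  · ext g
    simp only [Set.mem_setOf_eq]
    constructor
    · intro hg
      exact hmain g ⟨x, by rw [hg]; exact hxBx, hxBx⟩
    · intro hg
      exact hGxBx g hg
  · ext g
    simp only [Set.mem_setOf_eq]
    rw [hslice]
    constructor
    · intro hg
      have hxgN : x ∈ g • N := by rw [hg]; exact hxN
      rw [Set.mem_smul_set] at hxgN
      obtain ⟨y, hy, hyx⟩ := hxgN
      exact hmain g ⟨x, ⟨y, hNBx hy, hyx⟩, hxBx⟩
    · intro hg
      exact hNinv g hg
  · rw [hslice]
    exact hxN
  · exact (interior_maximal hDBx hDopen) hxD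
  · rw [hslice]
    exact hNconn
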